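/- For the Poisson bivector π = ∂_φ ∧ ∂_{p_φ} + (cos φ/Δ)(J sin φ · p_θ − m r² p_ψ) ∂_{p_φ} ∧ ∂_{p_θ} on ℝ⁴ with Δ(φ) = m r² − J sin²φ, the functions 𝒥₁ = (p_θ − p_ψ sin φ)/√(2Δ) and 𝒥₂ = p_ψ are Casimir functions, i.e. π^♯(d𝒥₁) = 0 and π^♯(d𝒥₂) = 0. -/

import Mathlib

set_option maxHeartbeats 1000000 in
/-- The snakeboard horizontal gauge momenta `𝒥₁ = (p_θ - p_ψ sin φ)/√(2Δ)` and
`𝒥₂ = p_ψ` are Casimirs of the reduced Poisson bivector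
`π = ∂_φ ∧ ∂_{p_φ} + (cos φ/Δ)(J sin φ p_θ - m r² p_ψ) ∂_{p_φ} ∧ ∂_{p_θ}`. -/
theorem stmt12 (m r J : ℝ) (hm : 0 < m) (hr : 0 < r) (hJ : 0 < J)
    (hmrJ : J < m * r ^ 2) :
    let Δ : ℝ → ℝ := fun φ => m * r ^ 2 - J * Real.sin φ ^ 2
    let P : (Fin 4 → ℝ) → Fin 4 → Fin 4 → ℝ := fun x i j =>
      if i = 0 ∧ j = 1 then 1
      else if i = 1 ∧ j = 0 then -1
      else if i = 1 ∧ j = 2 then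
        Real.cos (x 0) / Δ (x 0) * (J * Real.sin (x 0) * x 2 - m * r ^ 2 * x 3)
      else if i = 2 ∧ j = 1 then
        -(Real.cos (x 0) / Δ (x 0) * (J * Real.sin (x 0) * x 2 - m * r ^ 2 * x 3))
      else 0
    let J₁ : (Fin 4 → ℝ) → ℝ := fun x =>
      (x 2 - x 3 * Real.sin (x 0)) / Real.sqrt (2 * Δ (x 0))
    let J₂ : (Fin 4 → ℝ) → ℝ := fun x => x 3
    ∀ (x : Fin 4 → ℝ) (j : Fin 4),
      (∑ i : Fin 4, P x i j * fderiv ℝ J₁ x (Pi.single i 1)) = 0 ∧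
      (∑ i : Fin 4, P x i j * fderiv ℝ J₂ x (Pi.single i 1)) = 0 := by
  intro Δ P J₁ J₂ x j
  have hs2 : Real.sin (x 0) ^ 2 ≤ 1 := Real.sin_sq_le_one (x 0)
  have hD : 0 < Δ (x 0) := by
    have : J * Real.sin (x 0) ^ 2 ≤ J * 1 := by nlinarith
    simp only [Δ]; nlinarith
  have h2D : (0:ℝ) < 2 * Δ (x 0) := by linarith
  have hsq : 0 < Real.sqrt (2 * Δ (x 0)) := Real.sqrt_pos.mpr h2D
  have hsqsq : Real.sqrt (2 * Δ (x 0)) ^ 2 = 2 * Δ (x 0) := Real.sq_sqrt h2D.le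
  have hd2 : fderiv ℝ J₂ x = (ContinuousLinearMap.proj 3 : (Fin 4 → ℝ) →L[ℝ] ℝ) :=
    ((ContinuousLinearMap.proj 3 : (Fin 4 → ℝ) →L[ℝ] ℝ).hasFDerivAt (x := x)).fderiv
  have h0 := ((ContinuousLinearMap.proj 0 : (Fin 4 → ℝ) →L[ℝ] ℝ).hasFDerivAt (x := x))
  have h2 := ((ContinuousLinearMap.proj 2 : (Fin 4 → ℝ) →L[ℝ] ℝ).hasFDerivAt (x := x))
  have h3 := ((ContinuousLinearMap.proj 3 : (Fin 4 → ℝ) →L[ℝ] ℝ).hasFDerivAt (x := x))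
  have hsinF : HasFDerivAt (fun y : Fin 4 → ℝ => Real.sin (y 0))
      (Real.cos (x 0) • (ContinuousLinearMap.proj 0 : (Fin 4 → ℝ) →L[ℝ] ℝ)) x :=
    by have := (Real.hasDerivAt_sin (x 0)).comp_hasFDerivAt x h0; exact this
  have hN := h2.sub (h3.mul hsinF)
  have hinner := ((((Real.hasDerivAt_sin (x 0)).pow 2).const_mul J).const_sub
      (m * r ^ 2)).const_mul 2
  have hsqrtD := (Real.hasDerivAt_sqrt (x := 2 * Δ (x 0)) h2D.ne').comp (x 0) hinner
  have hinv := hsqrtD.inv hsq.ne'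
  have hinvF := hinv.comp_hasFDerivAt x h0
  have hJ1eq : J₁ = fun y : Fin 4 → ℝ =>
      (y 2 - y 3 * Real.sin (y 0)) * (Real.sqrt (2 * Δ (y 0)))⁻¹ := by
    funext y; simp [J₁, div_eq_mul_inv]
  have hder0 := hN.mul hinvF
  have hder : HasFDerivAt J₁ _ x := hder0
  rw [hder.fderiv, hd2]
  have hDe : Δ (x 0) = m * r ^ 2 - J * Real.sin (x 0) ^ 2 := rfl
  have hB : Δ (x 0) = -(Real.sin (x 0) ^ 2 * J) + m * r ^ 2 := by rw [hDe]; ring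
  constructor <;>
  · rw [Fin.sum_univ_four]
    fin_cases j <;>
      simp [P, ContinuousLinearMap.add_apply, ContinuousLinearMap.sub_apply,
        ContinuousLinearMap.smul_apply, ContinuousLinearMap.proj_apply, smul_eq_mul,
        Pi.single_apply, Fin.isValue]
    all_goals (field_simp; ring_nf)
    all_goals (simp only [hB] at *; field_simp; ring_nf)
    all_goals
      have hA : Real.sqrt (-(Real.sin (x 0) ^ 2 * J) + m * r ^ 2) ^ 2
          = -(Real.sin (x 0) ^ 2 * J) + m * r ^ 2 := Real.sq_sqrt (by nlinarith)
      have h2' : Real.sqrt 2 ^ 2 = 2 := Real.sq_sqrt (by norm_num)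
      simp only [show (4:ℕ) = 2 * 2 from rfl, pow_mul, hA, h2']
      ring
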